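/- Let C' ⊆ {0,1}^{m₁} × {0,1,2}^{m₂} and for a word in {0,1}^{m₁} × {0,1,2}^{m₂} let its 𝒵^{m₁}×𝒯^{m₂}-ball consist of all words obtained by applying at most one transition in at most one coordinate, where in each of the first m₁ (binary) coordinates only the transition 1→0 is allowed and in each of the last m₂ (ternary) coordinates the 𝒯-transitions 1→0, 0→1, 0→2, 2→0 are allowed. If these balls are pairwise disjoint for the codewords of C', then C = {(b,u) ∈ {0,1}^{m₁+2m₂} : b ∈ {0,1}^{m₁}, (b,c) ∈ C', u ∈ 𝔖^{m₂}(c)} satisfies Δ(x,y) ≥ 2 for all distinct x, y ∈ C, i.e., C is a 1-code of length m₁ + 2m₂. -/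
import Mathlib


/-- `N(x,y) = Σᵢ max(yᵢ - xᵢ, 0)` for binary words viewed in `ℤⁿ`. -/
def Nasym {n : ℕ} (x y : Fin n → Fin 2) : ℤ :=
  ∑ i, max (((y i : ℕ) : ℤ) - ((x i : ℕ) : ℤ)) 0

/-- The asymmetric distance `Δ(x,y) = max(N(x,y), N(y,x))`. -/
def Dasym {n : ℕ} (x y : Fin n → Fin 2) : ℤ :=
  max (Nasym x y) (Nasym y x)

/-- The map `𝔖̃` on a binary pair: `00 ↦ 0`, `11 ↦ 0`, `01 ↦ 1`, `10 ↦ 2`. -/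
def Stilde2 (p : Fin 2 × Fin 2) : Fin 3 :=
  if p.1 = p.2 then 0 else if p.1 = 0 then 1 else 2

/-- `𝔖` sends a ternary symbol `t` to the set of binary pairs mapping to it under `𝔖̃`. -/
def Sset (t : Fin 3) : Set (Fin 2 × Fin 2) := {p | Stilde2 p = t}

/-- Membership `u ∈ 𝔖^m(c)`. -/
def Smem {m : ℕ} (c : Fin m → Fin 3) (u : Fin (2 * m) → Fin 2) : Prop :=
  ∀ j : Fin m,
    (u ⟨2 * (j : ℕ), by have := j.isLt; omega⟩,
     u ⟨2 * (j : ℕ) + 1, by have := j.isLt; omega⟩) ∈ Sset (c j)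

/-- The single-symbol transitions of the ternary channel `𝒯`:
`1 → 0`, `0 → 1`, `0 → 2`, `2 → 0`. -/
def Ttrans (a b : Fin 3) : Prop :=
  (a = 1 ∧ b = 0) ∨ (a = 0 ∧ b = 1) ∨ (a = 0 ∧ b = 2) ∨ (a = 2 ∧ b = 0)

/-- The `𝒵^{m₁} × 𝒯^{m₂}`-ball of a word in `{0,1}^{m₁} × {0,1,2}^{m₂}`: words obtained by
applying at most one transition in at most one coordinate, where in each binary coordinate
only `1 → 0` is allowed and in each ternary coordinate the `𝒯`-transitions are allowed. -/
def ZmTBall {m₁ m₂ : ℕ} (w : (Fin m₁ → Fin 2) × (Fin m₂ → Fin 3)) :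
    Set ((Fin m₁ → Fin 2) × (Fin m₂ → Fin 3)) :=
  {d | d = w ∨
       (d.2 = w.2 ∧ ∃ i, w.1 i = 1 ∧ d.1 i = 0 ∧ ∀ j, j ≠ i → d.1 j = w.1 j) ∨
       (d.1 = w.1 ∧ ∃ i, Ttrans (w.2 i) (d.2 i) ∧ ∀ j, j ≠ i → d.2 j = w.2 j)}

private lemma fin2_ne {a b : Fin 2} (h : a ≠ b) : (a = 0 ∧ b = 1) ∨ (a = 1 ∧ b = 0) := by
  revert h; revert a b; decide

private lemma Nasym_two {n : ℕ} (x y : Fin n → Fin 2) {i j : Fin n} (hij : i ≠ j)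
    (hi : x i = 0 ∧ y i = 1) (hj : x j = 0 ∧ y j = 1) : 2 ≤ Nasym x y := by
  have hnn : ∀ k ∈ Finset.univ, k ∉ ({i,j} : Finset (Fin n)) →
      (0:ℤ) ≤ max (((y k : ℕ) : ℤ) - ((x k : ℕ) : ℤ)) 0 := fun _ _ _ => le_max_right _ _
  have hle := Finset.sum_le_sum_of_subset_of_nonneg (Finset.subset_univ ({i,j} : Finset (Fin n))) hnn
  rw [Finset.sum_pair hij, hi.1, hi.2, hj.1, hj.2] at hle
  simpa [Nasym] using hle

private lemma Smem_eq {m : ℕ} {c : Fin m → Fin 3} {u : Fin (2*m) → Fin 2} (hu : Smem c u)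
    (j : Fin m) :
    c j = Stilde2 (u ⟨2*(j:ℕ), by have := j.isLt; omega⟩,
                   u ⟨2*(j:ℕ)+1, by have := j.isLt; omega⟩) :=
  (hu j).symm

/-- A one-bit difference between pairs gives a `𝒯`-edge between the symbols, both ways. -/
private lemma pair_edge (p q : Fin 2 × Fin 2) (hne : p ≠ q) (h : p.1 = q.1 ∨ p.2 = q.2) :
    Ttrans (Stilde2 p) (Stilde2 q) ∧ Ttrans (Stilde2 q) (Stilde2 p) ∧
      Stilde2 p ≠ Stilde2 q := by
  revert hne h; revert p q; unfold Ttrans; decide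

/-- Two distinct pairs, not related by a double-up or double-down, have distinct symbols and
a common symbol within one `𝒯`-transition (or equality) of both. -/
private lemma pair_mid (p q : Fin 2 × Fin 2) (hne : p ≠ q)
    (h1 : ¬(p.1 = 0 ∧ q.1 = 1 ∧ p.2 = 0 ∧ q.2 = 1))
    (h2 : ¬(p.1 = 1 ∧ q.1 = 0 ∧ p.2 = 1 ∧ q.2 = 0)) :
    ∃ z, (Ttrans (Stilde2 p) z ∨ z = Stilde2 p) ∧ (Ttrans (Stilde2 q) z ∨ z = Stilde2 q) ∧
      Stilde2 p ≠ Stilde2 q := by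
  revert hne h1 h2; revert p q; unfold Ttrans; decide

set_option maxHeartbeats 1000000 in
/-- If `C' ⊆ {0,1}^{m₁} × {0,1,2}^{m₂}` has pairwise disjoint `𝒵^{m₁} × 𝒯^{m₂}`-balls,
then `C = {(b,u) : (b,c) ∈ C', u ∈ 𝔖^{m₂}(c)} ⊆ {0,1}^{m₁+2m₂}` is a `1`-code of length
`m₁ + 2m₂`: `Δ(x,y) ≥ 2` for all distinct `x, y ∈ C`. -/
theorem image_of_ZmT_sec_is_one_code (m₁ m₂ : ℕ)
    (C' : Set ((Fin m₁ → Fin 2) × (Fin m₂ → Fin 3)))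
    (hsec : ∀ w ∈ C', ∀ w' ∈ C', w ≠ w' → Disjoint (ZmTBall w) (ZmTBall w')) :
    ∀ x y : Fin (m₁ + 2 * m₂) → Fin 2,
      (∃ w ∈ C', ∃ u : Fin (2 * m₂) → Fin 2, Smem w.2 u ∧ x = Fin.append w.1 u) →
      (∃ w ∈ C', ∃ u : Fin (2 * m₂) → Fin 2, Smem w.2 u ∧ y = Fin.append w.1 u) →
      x ≠ y → 2 ≤ Dasym x y := by
  intro x y hx hy hxy
  by_contra hcon
  push_neg at hcon
  have hml : Nasym x y ≤ Dasym x y := le_max_left _ _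
  have hmr : Nasym y x ≤ Dasym x y := le_max_right _ _
  have hNxy : Nasym x y ≤ 1 := by omega
  have hNyx : Nasym y x ≤ 1 := by omega
  obtain ⟨w, hw, u, hu, hxdef⟩ := hx
  obtain ⟨w', hw', u', hu', hydef⟩ := hy
  obtain ⟨b, c⟩ := w
  obtain ⟨b', c'⟩ := w'
  -- direction uniqueness facts
  have hup : ∀ i j : Fin (m₁ + 2*m₂), x i = 0 → y i = 1 → x j = 0 → y j = 1 → i = j := by
    intro i j h1 h2 h3 h4
    by_contra hne
    have := Nasym_two x y hne ⟨h1, h2⟩ ⟨h3, h4⟩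
    omega
  have hdn : ∀ i j : Fin (m₁ + 2*m₂), x i = 1 → y i = 0 → x j = 1 → y j = 0 → i = j := by
    intro i j h1 h2 h3 h4
    by_contra hne
    have := Nasym_two y x hne ⟨h2, h1⟩ ⟨h4, h3⟩
    omega
  have hthree : ∀ i j k : Fin (m₁ + 2*m₂), i ≠ j → i ≠ k → j ≠ k →
      x i ≠ y i → x j ≠ y j → x k ≠ y k → False := by
    intro i j k hij hik hjk hi hj hk
    rcases fin2_ne hi with ⟨hi1, hi2⟩ | ⟨hi1, hi2⟩ <;>
    rcases fin2_ne hj with ⟨hj1, hj2⟩ | ⟨hj1, hj2⟩ <;>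
    rcases fin2_ne hk with ⟨hk1, hk2⟩ | ⟨hk1, hk2⟩ <;>
    first
      | exact hij (hup i j hi1 hi2 hj1 hj2)
      | exact hik (hup i k hi1 hi2 hk1 hk2)
      | exact hjk (hup j k hj1 hj2 hk1 hk2)
      | exact hij (hdn i j hi1 hi2 hj1 hj2)
      | exact hik (hdn i k hi1 hi2 hk1 hk2)
      | exact hjk (hdn j k hj1 hj2 hk1 hk2)
  have htwo : ∀ i j : Fin (m₁ + 2*m₂), i ≠ j → x i ≠ y i → x j ≠ y j →
      (x i = 0 ∧ y i = 1 ∧ x j = 1 ∧ y j = 0) ∨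
      (x i = 1 ∧ y i = 0 ∧ x j = 0 ∧ y j = 1) := by
    intro i j hij hi hj
    rcases fin2_ne hi with ⟨hi1, hi2⟩ | ⟨hi1, hi2⟩ <;>
    rcases fin2_ne hj with ⟨hj1, hj2⟩ | ⟨hj1, hj2⟩
    · exact absurd (hup i j hi1 hi2 hj1 hj2) hij
    · exact Or.inl ⟨hi1, hi2, hj1, hj2⟩
    · exact Or.inr ⟨hi1, hi2, hj1, hj2⟩
    · exact absurd (hdn i j hi1 hi2 hj1 hj2) hij
  -- coordinate access
  have hxb : ∀ i : Fin m₁, x (Fin.castAdd (2*m₂) i) = b i := by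
    intro i; rw [hxdef]; exact Fin.append_left _ _ i
  have hyb : ∀ i : Fin m₁, y (Fin.castAdd (2*m₂) i) = b' i := by
    intro i; rw [hydef]; exact Fin.append_left _ _ i
  have hxu : ∀ k : Fin (2*m₂), x (Fin.natAdd m₁ k) = u k := by
    intro k; rw [hxdef]; exact Fin.append_right _ _ k
  have hyu : ∀ k : Fin (2*m₂), y (Fin.natAdd m₁ k) = u' k := by
    intro k; rw [hydef]; exact Fin.append_right _ _ k
  -- index facts
  have hcane : ∀ (i : Fin m₁) (k : Fin (2*m₂)),
      Fin.castAdd (2*m₂) i ≠ Fin.natAdd m₁ k := by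
    intro i k h
    have hv : (i : ℕ) = m₁ + (k : ℕ) := congrArg Fin.val h
    have := i.isLt
    omega
  have hcainj : ∀ {i i' : Fin m₁}, i ≠ i' → Fin.castAdd (2*m₂) i ≠ Fin.castAdd (2*m₂) i' := by
    intro i i' h hh
    have hv := congrArg Fin.val hh
    exact h (Fin.ext hv)
  have hnainj : ∀ {k k' : Fin (2*m₂)}, k ≠ k' → Fin.natAdd m₁ k ≠ Fin.natAdd m₁ k' := by
    intro k k' h hh
    have hv : m₁ + (k : ℕ) = m₁ + (k' : ℕ) := congrArg Fin.val hh
    exact h (Fin.ext (by omega))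
  have hSc : ∀ j : Fin m₂, c j = Stilde2
      (u ⟨2*(j:ℕ), by have := j.isLt; omega⟩, u ⟨2*(j:ℕ)+1, by have := j.isLt; omega⟩) :=
    Smem_eq hu
  have hSc' : ∀ j : Fin m₂, c' j = Stilde2
      (u' ⟨2*(j:ℕ), by have := j.isLt; omega⟩, u' ⟨2*(j:ℕ)+1, by have := j.isLt; omega⟩) :=
    Smem_eq hu'
  have hfin : ∀ d, d ∈ ZmTBall ((b, c) : (Fin m₁ → Fin 2) × (Fin m₂ → Fin 3)) →
      d ∈ ZmTBall (b', c') → ((b, c) : (Fin m₁ → Fin 2) × (Fin m₂ → Fin 3)) ≠ (b', c') →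
      False := by
    intro d h1 h2 hne
    exact Set.disjoint_left.mp (hsec _ hw _ hw' hne) h1 h2
  by_cases hbb : b = b'
  · subst hbb
    by_cases huu : u = u'
    · subst huu
      exact hxy (hxdef.trans hydef.symm)
    · -- Case 2 : only the 𝔖-part differs
      obtain ⟨k₁, hk₁⟩ := Function.ne_iff.mp huu
      have hk₁lt := k₁.isLt
      obtain ⟨j₁, hj₁v⟩ : ∃ j : Fin m₂, (j:ℕ) = (k₁:ℕ)/2 := ⟨⟨(k₁:ℕ)/2, by omega⟩, rfl⟩
      by_cases hsame : ∀ k : Fin (2*m₂), u k ≠ u' k → (k : ℕ)/2 = (k₁ : ℕ)/2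
      · -- all differences inside pair j₁
        have hoffc : ∀ j : Fin m₂, j ≠ j₁ → c j = c' j := by
          intro j hj
          have hjlt := j.isLt
          have e0 : u ⟨2*(j:ℕ), by omega⟩ = u' ⟨2*(j:ℕ), by omega⟩ := by
            by_contra hne
            have hv : (2*(j:ℕ))/2 = (k₁ : ℕ)/2 := hsame _ hne
            exact hj (Fin.ext (by omega))
          have e1 : u ⟨2*(j:ℕ)+1, by omega⟩ = u' ⟨2*(j:ℕ)+1, by omega⟩ := by
            by_contra hne
            have hv : (2*(j:ℕ)+1)/2 = (k₁ : ℕ)/2 := hsame _ hne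
            exact hj (Fin.ext (by omega))
          rw [hSc j, hSc' j, e0, e1]
        have hp0 : (2*(j₁:ℕ) : ℕ) < 2*m₂ := by omega
        have hp1 : (2*(j₁:ℕ)+1 : ℕ) < 2*m₂ := by omega
        have hpne : (u ⟨2*(j₁:ℕ), hp0⟩, u ⟨2*(j₁:ℕ)+1, hp1⟩) ≠
            (u' ⟨2*(j₁:ℕ), hp0⟩, u' ⟨2*(j₁:ℕ)+1, hp1⟩) := by
          rcases Nat.mod_two_eq_zero_or_one (k₁ : ℕ) with hpar | hpar
          · have hk : k₁ = ⟨2*(j₁:ℕ), hp0⟩ := by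
              apply Fin.ext; show (k₁:ℕ) = 2*(j₁:ℕ); omega
            rw [hk] at hk₁
            exact fun h => hk₁ (congrArg Prod.fst h)
          · have hk : k₁ = ⟨2*(j₁:ℕ)+1, hp1⟩ := by
              apply Fin.ext; show (k₁:ℕ) = 2*(j₁:ℕ)+1; omega
            rw [hk] at hk₁
            exact fun h => hk₁ (congrArg Prod.snd h)
        have hposne : (⟨2*(j₁:ℕ), hp0⟩ : Fin (2*m₂)) ≠ ⟨2*(j₁:ℕ)+1, hp1⟩ := by
          intro h
          have hv : 2*(j₁:ℕ) = 2*(j₁:ℕ)+1 := congrArg Fin.val h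
          omega
        have hnup : ¬(u ⟨2*(j₁:ℕ), hp0⟩ = 0 ∧ u' ⟨2*(j₁:ℕ), hp0⟩ = 1 ∧
            u ⟨2*(j₁:ℕ)+1, hp1⟩ = 0 ∧ u' ⟨2*(j₁:ℕ)+1, hp1⟩ = 1) := by
          rintro ⟨h1, h2, h3, h4⟩
          refine hnainj hposne (hup _ _ ?_ ?_ ?_ ?_) <;>
            first
              | (rw [hxu]; assumption)
              | (rw [hyu]; assumption)
        have hndn : ¬(u ⟨2*(j₁:ℕ), hp0⟩ = 1 ∧ u' ⟨2*(j₁:ℕ), hp0⟩ = 0 ∧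
            u ⟨2*(j₁:ℕ)+1, hp1⟩ = 1 ∧ u' ⟨2*(j₁:ℕ)+1, hp1⟩ = 0) := by
          rintro ⟨h1, h2, h3, h4⟩
          refine hnainj hposne (hdn _ _ ?_ ?_ ?_ ?_) <;>
            first
              | (rw [hxu]; assumption)
              | (rw [hyu]; assumption)
        obtain ⟨z, hz1, hz2, hzne⟩ :=
          pair_mid _ _ hpne (by simpa using hnup) (by simpa using hndn)
        have hc1 : c j₁ = Stilde2 (u ⟨2*(j₁:ℕ), hp0⟩, u ⟨2*(j₁:ℕ)+1, hp1⟩) := hSc j₁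
        have hc1' : c' j₁ = Stilde2 (u' ⟨2*(j₁:ℕ), hp0⟩, u' ⟨2*(j₁:ℕ)+1, hp1⟩) := hSc' j₁
        rw [← hc1] at hz1 hzne
        rw [← hc1'] at hz2 hzne
        refine hfin (b, Function.update c j₁ z) ?_ ?_ ?_
        · rcases hz1 with ht | he
          · exact Or.inr (Or.inr ⟨rfl, j₁,
              show Ttrans (c j₁) (Function.update c j₁ z j₁) by
                rw [Function.update_self]; exact ht,
              fun j hj => Function.update_of_ne hj _ _⟩)
          · refine Or.inl ?_
            show (b, Function.update c j₁ z) = (b, c)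
            rw [he, Function.update_eq_self]
        · rcases hz2 with ht | he
          · refine Or.inr (Or.inr ⟨rfl, j₁,
              show Ttrans (c' j₁) (Function.update c j₁ z j₁) by
                rw [Function.update_self]; exact ht, ?_⟩)
            intro j hj
            exact (Function.update_of_ne hj _ _).trans (hoffc j hj)
          · have hcu : Function.update c j₁ z = c' := by
              funext j
              by_cases hj : j = j₁
              · subst hj; exact (Function.update_self _ _ _).trans he
              · exact (Function.update_of_ne hj _ _).trans (hoffc j hj)
            exact Or.inl (by rw [hcu])
        · intro h
          exact hzne (congrFun (congrArg Prod.snd h) j₁)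
      · -- a second pair differs
        push_neg at hsame
        obtain ⟨k₂, hk₂, hkk⟩ := hsame
        have hk₂lt := k₂.isLt
        obtain ⟨j₂, hj₂v⟩ : ∃ j : Fin m₂, (j:ℕ) = (k₂:ℕ)/2 := ⟨⟨(k₂:ℕ)/2, by omega⟩, rfl⟩
        have hkne : k₁ ≠ k₂ := fun h => hkk (by rw [h])
        have hone : ∀ k : Fin (2*m₂), u k ≠ u' k → k = k₁ ∨ k = k₂ := by
          intro k hk
          by_contra hcon2
          push_neg at hcon2
          refine hthree (Fin.natAdd m₁ k) (Fin.natAdd m₁ k₁) (Fin.natAdd m₁ k₂)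
            (hnainj hcon2.1) (hnainj hcon2.2) (hnainj hkne) ?_ ?_ ?_ <;>
            (rw [hxu, hyu]; assumption)
        have hjjne : j₁ ≠ j₂ := fun h => hkk (by
          have hv : (k₂ : ℕ)/2 = (k₁ : ℕ)/2 := by
            have := congrArg Fin.val h
            omega
          exact hv)
        have hoffc : ∀ j : Fin m₂, j ≠ j₁ → j ≠ j₂ → c j = c' j := by
          intro j hj hj'
          have hjlt := j.isLt
          have e0 : u ⟨2*(j:ℕ), by omega⟩ = u' ⟨2*(j:ℕ), by omega⟩ := by
            by_contra hne
            rcases hone _ hne with h | h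
            · have hv : 2*(j:ℕ) = (k₁:ℕ) := congrArg Fin.val h
              exact hj (Fin.ext (by omega))
            · have hv : 2*(j:ℕ) = (k₂:ℕ) := congrArg Fin.val h
              exact hj' (Fin.ext (by omega))
          have e1 : u ⟨2*(j:ℕ)+1, by omega⟩ = u' ⟨2*(j:ℕ)+1, by omega⟩ := by
            by_contra hne
            rcases hone _ hne with h | h
            · have hv : 2*(j:ℕ)+1 = (k₁:ℕ) := congrArg Fin.val h
              exact hj (Fin.ext (by omega))
            · have hv : 2*(j:ℕ)+1 = (k₂:ℕ) := congrArg Fin.val h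
              exact hj' (Fin.ext (by omega))
          rw [hSc j, hSc' j, e0, e1]
        -- each of the two pairs differs in exactly one bit
        have hedge : ∀ (jj : Fin m₂) (kk : Fin (2*m₂)), (jj:ℕ) = (kk:ℕ)/2 →
            u kk ≠ u' kk → (∀ k : Fin (2*m₂), u k ≠ u' k → (k:ℕ)/2 = (kk:ℕ)/2 → k = kk) →
            Ttrans (c jj) (c' jj) ∧ Ttrans (c' jj) (c jj) ∧ c jj ≠ c' jj := by
          intro jj kk hjjv hkk' honly
          have hjjlt := jj.isLt
          have hkklt := kk.isLt
          have hq0 : (2*(jj:ℕ) : ℕ) < 2*m₂ := by omega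
          have hq1 : (2*(jj:ℕ)+1 : ℕ) < 2*m₂ := by omega
          have hcompdiff : (u ⟨2*(jj:ℕ), hq0⟩, u ⟨2*(jj:ℕ)+1, hq1⟩) ≠
              (u' ⟨2*(jj:ℕ), hq0⟩, u' ⟨2*(jj:ℕ)+1, hq1⟩) ∧
              (u ⟨2*(jj:ℕ), hq0⟩ = u' ⟨2*(jj:ℕ), hq0⟩ ∨
               u ⟨2*(jj:ℕ)+1, hq1⟩ = u' ⟨2*(jj:ℕ)+1, hq1⟩) := by
            rcases Nat.mod_two_eq_zero_or_one (kk : ℕ) with hpar | hpar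
            · have hk : kk = ⟨2*(jj:ℕ), hq0⟩ := by
                apply Fin.ext; show (kk:ℕ) = 2*(jj:ℕ); omega
              rw [hk] at hkk'
              constructor
              · exact fun h => hkk' (congrArg Prod.fst h)
              · right
                by_contra hne
                have := honly _ hne (by show (2*(jj:ℕ)+1)/2 = (kk:ℕ)/2; omega)
                have hv : 2*(jj:ℕ)+1 = (kk:ℕ) := congrArg Fin.val this
                omega
            · have hk : kk = ⟨2*(jj:ℕ)+1, hq1⟩ := by
                apply Fin.ext; show (kk:ℕ) = 2*(jj:ℕ)+1; omega
              rw [hk] at hkk'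
              constructor
              · exact fun h => hkk' (congrArg Prod.snd h)
              · left
                by_contra hne
                have := honly _ hne (by show (2*(jj:ℕ))/2 = (kk:ℕ)/2; omega)
                have hv : 2*(jj:ℕ) = (kk:ℕ) := congrArg Fin.val this
                omega
          have := pair_edge _ _ hcompdiff.1 (by simpa using hcompdiff.2)
          have hc1 : c jj = Stilde2 (u ⟨2*(jj:ℕ), hq0⟩, u ⟨2*(jj:ℕ)+1, hq1⟩) := hSc jj
          have hc1' : c' jj = Stilde2 (u' ⟨2*(jj:ℕ), hq0⟩, u' ⟨2*(jj:ℕ)+1, hq1⟩) := hSc' jj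
          rwa [← hc1, ← hc1'] at this
        have hone₁ : ∀ k : Fin (2*m₂), u k ≠ u' k → (k:ℕ)/2 = (k₁:ℕ)/2 → k = k₁ := by
          intro k hk hk2
          rcases hone k hk with h | h
          · exact h
          · exfalso; apply hjjne; apply Fin.ext
            have hv : (k:ℕ) = (k₂:ℕ) := congrArg Fin.val h
            omega
        have hone₂ : ∀ k : Fin (2*m₂), u k ≠ u' k → (k:ℕ)/2 = (k₂:ℕ)/2 → k = k₂ := by
          intro k hk hk2
          rcases hone k hk with h | h
          · exfalso; apply hjjne; apply Fin.ext
            have hv : (k:ℕ) = (k₁:ℕ) := congrArg Fin.val h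
            omega
          · exact h
        obtain ⟨he1, -, hne1⟩ := hedge j₁ k₁ hj₁v hk₁ hone₁
        obtain ⟨-, he2, -⟩ := hedge j₂ k₂ hj₂v hk₂ hone₂
        refine hfin (b, Function.update c j₁ (c' j₁)) ?_ ?_ ?_
        · exact Or.inr (Or.inr ⟨rfl, j₁,
            show Ttrans (c j₁) (Function.update c j₁ (c' j₁) j₁) by
              rw [Function.update_self]; exact he1,
            fun j hj => Function.update_of_ne hj _ _⟩)
        · refine Or.inr (Or.inr ⟨rfl, j₂, ?_, ?_⟩)
          · show Ttrans (c' j₂) (Function.update c j₁ (c' j₁) j₂)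
            rw [Function.update_of_ne (Ne.symm hjjne)]
            exact he2
          · intro j hj
            by_cases hj1 : j = j₁
            · subst hj1; exact Function.update_self _ _ _
            · exact (Function.update_of_ne hj1 _ _).trans (hoffc j hj1 hj)
        · intro h
          exact hne1 (congrFun (congrArg Prod.snd h) j₁)
  · -- the binary parts differ
    obtain ⟨i₁, hi₁⟩ := Function.ne_iff.mp hbb
    by_cases huu : u = u'
    · subst huu
      -- Case 3 : only the binary part differs; the ternary parts coincide
      have hcc : c = c' := by
        funext j
        rw [hSc j, hSc' j]
      subst hcc
      by_cases honeb : ∀ i : Fin m₁, b i ≠ b' i → i = i₁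
      · -- a single binary difference
        rcases fin2_ne hi₁ with ⟨h1, h2⟩ | ⟨h1, h2⟩
        · -- b i₁ = 0, b' i₁ = 1 : w ∈ ball(w')
          refine hfin (b, c) (Or.inl rfl) ?_ ?_
          · refine Or.inr (Or.inl ⟨rfl, i₁, h2, h1, ?_⟩)
            intro j hj
            by_contra hne
            exact hj (honeb j hne)
          · exact fun h => hi₁ (congrFun (congrArg Prod.fst h) i₁)
        · -- b i₁ = 1, b' i₁ = 0 : w' ∈ ball(w)
          refine hfin (b', c) ?_ (Or.inl rfl) ?_
          · refine Or.inr (Or.inl ⟨rfl, i₁, h1, h2, ?_⟩)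
            intro j hj
            by_contra hne
            exact hj ((honeb j (fun h => hne h.symm)).symm ▸ rfl)
          · exact fun h => hi₁ (congrFun (congrArg Prod.fst h) i₁)
      · -- two binary differences, in opposite directions
        push_neg at honeb
        obtain ⟨i₂, hi₂, hii⟩ := honeb
        have honeb' : ∀ i : Fin m₁, b i ≠ b' i → i = i₁ ∨ i = i₂ := by
          intro i hi
          by_contra hcon2
          push_neg at hcon2
          refine hthree (Fin.castAdd (2*m₂) i) (Fin.castAdd (2*m₂) i₁)
            (Fin.castAdd (2*m₂) i₂) (hcainj hcon2.1) (hcainj hcon2.2)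
            (hcainj (fun h => hii h.symm)) ?_ ?_ ?_ <;>
            (rw [hxb, hyb]; assumption)
        have hoffb : ∀ i : Fin m₁, i ≠ i₁ → i ≠ i₂ → b i = b' i := by
          intro i h1 h2
          by_contra hne
          rcases honeb' i hne with h | h
          · exact h1 h
          · exact h2 h
        rcases htwo (Fin.castAdd (2*m₂) i₁) (Fin.castAdd (2*m₂) i₂)
          (hcainj (fun h => hii h.symm))
          (by rw [hxb, hyb]; exact hi₁) (by rw [hxb, hyb]; exact hi₂) with
          ⟨h1, h2, h3, h4⟩ | ⟨h1, h2, h3, h4⟩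
        · -- b i₁ = 0, b' i₁ = 1, b i₂ = 1, b' i₂ = 0
          rw [hxb] at h1 h3
          rw [hyb] at h2 h4
          refine hfin (Function.update b i₂ 0, c) ?_ ?_ ?_
          · refine Or.inr (Or.inl ⟨rfl, i₂, h3, Function.update_self _ _ _, ?_⟩)
            intro j hj
            exact Function.update_of_ne hj _ _
          · refine Or.inr (Or.inl ⟨rfl, i₁, h2, ?_, ?_⟩)
            · exact (Function.update_of_ne (fun h : i₁ = i₂ => hii h.symm) _ _).trans h1
            · intro j hj
              by_cases hj2 : j = i₂
              · subst hj2; exact (Function.update_self _ _ _).trans h4.symm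
              · exact (Function.update_of_ne hj2 _ _).trans (hoffb j hj hj2)
          · exact fun h => hi₁ (congrFun (congrArg Prod.fst h) i₁)
        · -- b i₁ = 1, b' i₁ = 0, b i₂ = 0, b' i₂ = 1
          rw [hxb] at h1 h3
          rw [hyb] at h2 h4
          refine hfin (Function.update b i₁ 0, c) ?_ ?_ ?_
          · refine Or.inr (Or.inl ⟨rfl, i₁, h1, Function.update_self _ _ _, ?_⟩)
            intro j hj
            exact Function.update_of_ne hj _ _
          · refine Or.inr (Or.inl ⟨rfl, i₂, h4, ?_, ?_⟩)
            · exact (Function.update_of_ne hii _ _).trans h3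
            · intro j hj
              by_cases hj1 : j = i₁
              · subst hj1; exact (Function.update_self _ _ _).trans h2.symm
              · exact (Function.update_of_ne hj1 _ _).trans (hoffb j hj1 hj)
          · exact fun h => hi₁ (congrFun (congrArg Prod.fst h) i₁)
    · -- Case 4 : one binary difference and one 𝔖-pair difference
      obtain ⟨k₁, hk₁⟩ := Function.ne_iff.mp huu
      have hk₁lt := k₁.isLt
      obtain ⟨j₁, hj₁v⟩ : ∃ j : Fin m₂, (j:ℕ) = (k₁:ℕ)/2 := ⟨⟨(k₁:ℕ)/2, by omega⟩, rfl⟩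
      have honeb : ∀ i : Fin m₁, b i ≠ b' i → i = i₁ := by
        intro i hi
        by_contra hcon2
        refine hthree (Fin.castAdd (2*m₂) i) (Fin.castAdd (2*m₂) i₁)
          (Fin.natAdd m₁ k₁) (hcainj hcon2) (hcane _ _) (hcane _ _) ?_ ?_ ?_
        · rw [hxb, hyb]; exact hi
        · rw [hxb, hyb]; exact hi₁
        · rw [hxu, hyu]; exact hk₁
      have honeu : ∀ k : Fin (2*m₂), u k ≠ u' k → k = k₁ := by
        intro k hk
        by_contra hcon2
        refine hthree (Fin.natAdd m₁ k) (Fin.natAdd m₁ k₁) (Fin.castAdd (2*m₂) i₁)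
          (hnainj hcon2) (Ne.symm (hcane _ _)) (Ne.symm (hcane _ _)) ?_ ?_ ?_
        · rw [hxu, hyu]; exact hk
        · rw [hxu, hyu]; exact hk₁
        · rw [hxb, hyb]; exact hi₁
      have hoffb : ∀ i : Fin m₁, i ≠ i₁ → b i = b' i := by
        intro i h
        by_contra hne
        exact h (honeb i hne)
      have hoffc : ∀ j : Fin m₂, j ≠ j₁ → c j = c' j := by
        intro j hj
        have hjlt := j.isLt
        have e0 : u ⟨2*(j:ℕ), by omega⟩ = u' ⟨2*(j:ℕ), by omega⟩ := by
          by_contra hne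
          have hv : 2*(j:ℕ) = (k₁:ℕ) := congrArg Fin.val (honeu _ hne)
          exact hj (Fin.ext (by omega))
        have e1 : u ⟨2*(j:ℕ)+1, by omega⟩ = u' ⟨2*(j:ℕ)+1, by omega⟩ := by
          by_contra hne
          have hv : 2*(j:ℕ)+1 = (k₁:ℕ) := congrArg Fin.val (honeu _ hne)
          exact hj (Fin.ext (by omega))
        rw [hSc j, hSc' j, e0, e1]
      have hq0 : (2*(j₁:ℕ) : ℕ) < 2*m₂ := by omega
      have hq1 : (2*(j₁:ℕ)+1 : ℕ) < 2*m₂ := by omega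
      have hcompdiff : (u ⟨2*(j₁:ℕ), hq0⟩, u ⟨2*(j₁:ℕ)+1, hq1⟩) ≠
          (u' ⟨2*(j₁:ℕ), hq0⟩, u' ⟨2*(j₁:ℕ)+1, hq1⟩) ∧
          (u ⟨2*(j₁:ℕ), hq0⟩ = u' ⟨2*(j₁:ℕ), hq0⟩ ∨
           u ⟨2*(j₁:ℕ)+1, hq1⟩ = u' ⟨2*(j₁:ℕ)+1, hq1⟩) := by
        rcases Nat.mod_two_eq_zero_or_one (k₁ : ℕ) with hpar | hpar
        · have hk : k₁ = ⟨2*(j₁:ℕ), hq0⟩ := by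
            apply Fin.ext; show (k₁:ℕ) = 2*(j₁:ℕ); omega
          rw [hk] at hk₁
          constructor
          · exact fun h => hk₁ (congrArg Prod.fst h)
          · right
            by_contra hne
            have hv : 2*(j₁:ℕ)+1 = (k₁:ℕ) := congrArg Fin.val (honeu _ hne)
            omega
        · have hk : k₁ = ⟨2*(j₁:ℕ)+1, hq1⟩ := by
            apply Fin.ext; show (k₁:ℕ) = 2*(j₁:ℕ)+1; omega
          rw [hk] at hk₁
          constructor
          · exact fun h => hk₁ (congrArg Prod.snd h)
          · left
            by_contra hne
            have hv : 2*(j₁:ℕ) = (k₁:ℕ) := congrArg Fin.val (honeu _ hne)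
            omega
      have hedge := pair_edge _ _ hcompdiff.1 (by simpa using hcompdiff.2)
      have hc1 : c j₁ = Stilde2 (u ⟨2*(j₁:ℕ), hq0⟩, u ⟨2*(j₁:ℕ)+1, hq1⟩) := hSc j₁
      have hc1' : c' j₁ = Stilde2 (u' ⟨2*(j₁:ℕ), hq0⟩, u' ⟨2*(j₁:ℕ)+1, hq1⟩) := hSc' j₁
      rw [← hc1, ← hc1'] at hedge
      obtain ⟨he1, he2, -⟩ := hedge
      rcases htwo (Fin.castAdd (2*m₂) i₁) (Fin.natAdd m₁ k₁) (hcane _ _)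
        (by rw [hxb, hyb]; exact hi₁) (by rw [hxu, hyu]; exact hk₁) with
        ⟨h1, h2, -, -⟩ | ⟨h1, h2, -, -⟩
      · -- b i₁ = 0, b' i₁ = 1 : use d = (b, c')
        rw [hxb] at h1
        rw [hyb] at h2
        refine hfin (b, c') ?_ ?_ ?_
        · exact Or.inr (Or.inr ⟨rfl, j₁, he1, fun j hj => (hoffc j hj).symm⟩)
        · exact Or.inr (Or.inl ⟨rfl, i₁, h2, h1, fun j hj => hoffb j hj⟩)
        · exact fun h => hi₁ (congrFun (congrArg Prod.fst h) i₁)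
      · -- b i₁ = 1, b' i₁ = 0 : use d = (b', c)
        rw [hxb] at h1
        rw [hyb] at h2
        refine hfin (b', c) ?_ ?_ ?_
        · exact Or.inr (Or.inl ⟨rfl, i₁, h1, h2, fun j hj => (hoffb j hj).symm⟩)
        · exact Or.inr (Or.inr ⟨rfl, j₁, he2, fun j hj => hoffc j hj⟩)
        · exact fun h => hi₁ (congrFun (congrArg Prod.fst h) i₁)
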